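/- Let κ > 0 and b > 0 satisfy √b > (4/3)·κ, and set τ* = 8κ²/(√b − (4/3)·κ). Then τ²·b/(4κ·(2κ + τ/3)) ≥ √b·τ for every τ ≥ τ*, and consequently ∫₀^∞ exp(−τ²·b/(4κ·(2κ + τ/3))) dτ ≤ τ* + e^{−√b·τ*}/√b < ∞. -/

import Mathlib

open MeasureTheory

/-- The bound (4.28) of the paper: finiteness of `∫₀^∞ e^{-w₀(τ)} dτ` for the Bernstein
exponent `w₀(τ) = τ²b/(4κ(2κ + τ/3))`, with the explicit bound `τ* + e^{-√b·τ*}/√b`. -/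
theorem bernstein_tail_integral_bound
    (κ b : ℝ) (hκ : 0 < κ) (hb : 0 < b)
    (hsqrt : Real.sqrt b > (4 / 3) * κ)
    (τs : ℝ) (hτs : τs = 8 * κ ^ 2 / (Real.sqrt b - (4 / 3) * κ)) :
    (∀ τ ≥ τs, τ ^ 2 * b / (4 * κ * (2 * κ + τ / 3)) ≥ Real.sqrt b * τ) ∧
    IntegrableOn (fun τ => Real.exp (-(τ ^ 2 * b / (4 * κ * (2 * κ + τ / 3)))))
      (Set.Ioi 0) ∧
    (∫ τ in Set.Ioi (0 : ℝ), Real.exp (-(τ ^ 2 * b / (4 * κ * (2 * κ + τ / 3)))))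
      ≤ τs + Real.exp (-(Real.sqrt b * τs)) / Real.sqrt b := by
  set s := Real.sqrt b with hs
  have hs2 : s ^ 2 = b := Real.sq_sqrt hb.le
  have hspos : 0 < s := lt_trans (by positivity) hsqrt
  have hden : 0 < s - (4 / 3) * κ := sub_pos.mpr hsqrt
  have hτspos : 0 < τs := by rw [hτs]; positivity
  -- Part 1
  have part1 : ∀ τ ≥ τs, τ ^ 2 * b / (4 * κ * (2 * κ + τ / 3)) ≥ s * τ := by
    intro τ hτ
    have hτpos : 0 < τ := lt_of_lt_of_le hτspos hτ
    have hD : 0 < 4 * κ * (2 * κ + τ / 3) := by positivity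
    rw [ge_iff_le, le_div_iff₀ hD]
    have hkey : 8 * κ ^ 2 ≤ τ * (s - (4 / 3) * κ) := by
      rw [hτs] at hτ
      calc 8 * κ ^ 2 = (8 * κ ^ 2 / (s - (4 / 3) * κ)) * (s - (4 / 3) * κ) := by
            rw [div_mul_cancel₀ _ hden.ne']
        _ ≤ τ * (s - (4 / 3) * κ) := by nlinarith
    nlinarith [mul_pos hspos hτpos, mul_le_mul_of_nonneg_left hkey
      (mul_pos hspos hτpos).le]
  have hm0 : Measurable fun τ : ℝ => τ ^ 2 * b / (4 * κ * (2 * κ + τ / 3)) :=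
    ((measurable_id.pow_const 2).mul_const b).div
      (measurable_const.mul ((measurable_const.add (measurable_id.div_const 3))))
  refine ⟨part1, ?_, ?_⟩
  · -- Integrability
    have hmeas : AEStronglyMeasurable
        (fun τ => Real.exp (-(τ ^ 2 * b / (4 * κ * (2 * κ + τ / 3))))) volume := by
      exact (Real.measurable_exp.comp hm0.neg).aestronglyMeasurable
    have h1 : IntegrableOn
        (fun τ => Real.exp (-(τ ^ 2 * b / (4 * κ * (2 * κ + τ / 3)))))
        (Set.Ioc 0 τs) := by
      apply Measure.integrableOn_of_bounded (M := 1)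
      · simp [Real.volume_Ioc]
      · exact hmeas
      · filter_upwards [ae_restrict_mem measurableSet_Ioc] with τ hτ
        rw [Real.norm_eq_abs, abs_of_pos (Real.exp_pos _)]
        refine Real.exp_le_one_iff.mpr (neg_nonpos.mpr ?_)
        have : 0 < 4 * κ * (2 * κ + τ / 3) := by
          have := hτ.1; positivity
        positivity
    have h2 : IntegrableOn
        (fun τ => Real.exp (-(τ ^ 2 * b / (4 * κ * (2 * κ + τ / 3)))))
        (Set.Ioi τs) := by
      apply Integrable.mono (exp_neg_integrableOn_Ioi τs hspos) hmeas.restrict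
      filter_upwards [ae_restrict_mem measurableSet_Ioi] with τ hτ
      rw [Real.norm_eq_abs, Real.norm_eq_abs, abs_of_pos (Real.exp_pos _),
        abs_of_pos (Real.exp_pos _)]
      apply Real.exp_le_exp.mpr
      have := part1 τ (le_of_lt hτ)
      linarith
    have := h1.union h2
    rwa [Set.Ioc_union_Ioi_eq_Ioi hτspos.le] at this
  · -- Integral bound
    have hmeas : AEStronglyMeasurable
        (fun τ => Real.exp (-(τ ^ 2 * b / (4 * κ * (2 * κ + τ / 3))))) volume := by
      exact (Real.measurable_exp.comp hm0.neg).aestronglyMeasurable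
    have h1 : IntegrableOn
        (fun τ => Real.exp (-(τ ^ 2 * b / (4 * κ * (2 * κ + τ / 3)))))
        (Set.Ioc 0 τs) := by
      apply Measure.integrableOn_of_bounded (M := 1)
      · simp [Real.volume_Ioc]
      · exact hmeas
      · filter_upwards [ae_restrict_mem measurableSet_Ioc] with τ hτ
        rw [Real.norm_eq_abs, abs_of_pos (Real.exp_pos _)]
        refine Real.exp_le_one_iff.mpr (neg_nonpos.mpr ?_)
        have : 0 < 4 * κ * (2 * κ + τ / 3) := by
          have := hτ.1; positivity
        positivity
    have h2 : IntegrableOn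
        (fun τ => Real.exp (-(τ ^ 2 * b / (4 * κ * (2 * κ + τ / 3)))))
        (Set.Ioi τs) := by
      apply Integrable.mono (exp_neg_integrableOn_Ioi τs hspos) hmeas.restrict
      filter_upwards [ae_restrict_mem measurableSet_Ioi] with τ hτ
      rw [Real.norm_eq_abs, Real.norm_eq_abs, abs_of_pos (Real.exp_pos _),
        abs_of_pos (Real.exp_pos _)]
      apply Real.exp_le_exp.mpr
      have := part1 τ (le_of_lt hτ)
      linarith
    have hsplit : (∫ τ in Set.Ioi (0 : ℝ),
        Real.exp (-(τ ^ 2 * b / (4 * κ * (2 * κ + τ / 3)))))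
        = (∫ τ in Set.Ioc 0 τs, Real.exp (-(τ ^ 2 * b / (4 * κ * (2 * κ + τ / 3)))))
        + ∫ τ in Set.Ioi τs, Real.exp (-(τ ^ 2 * b / (4 * κ * (2 * κ + τ / 3)))) := by
      rw [← setIntegral_union (Set.Ioc_disjoint_Ioi le_rfl) measurableSet_Ioi h1 h2,
        Set.Ioc_union_Ioi_eq_Ioi hτspos.le]
    rw [hsplit]
    have hb1 : (∫ τ in Set.Ioc 0 τs,
        Real.exp (-(τ ^ 2 * b / (4 * κ * (2 * κ + τ / 3))))) ≤ τs := by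
      have : (∫ τ in Set.Ioc 0 τs,
          Real.exp (-(τ ^ 2 * b / (4 * κ * (2 * κ + τ / 3)))))
          ≤ ∫ _ in Set.Ioc 0 τs, (1 : ℝ) := by
        apply setIntegral_mono_on h1 ((integrableOn_const_iff (C := (1 : ℝ))).mpr (Or.inr (by
          simp [Real.volume_Ioc]))) measurableSet_Ioc
        intro τ hτ
        refine Real.exp_le_one_iff.mpr (neg_nonpos.mpr ?_)
        have : 0 < 4 * κ * (2 * κ + τ / 3) := by
          have := hτ.1; positivity
        positivity
      simpa [Real.volume_Ioc, hτspos.le] using this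
    have hb2 : (∫ τ in Set.Ioi τs,
        Real.exp (-(τ ^ 2 * b / (4 * κ * (2 * κ + τ / 3)))))
        ≤ Real.exp (-(s * τs)) / s := by
      have hmono : (∫ τ in Set.Ioi τs,
          Real.exp (-(τ ^ 2 * b / (4 * κ * (2 * κ + τ / 3)))))
          ≤ ∫ τ in Set.Ioi τs, Real.exp (-(s * τ)) := by
        apply setIntegral_mono_on h2 (by
          simpa [neg_mul] using exp_neg_integrableOn_Ioi τs hspos) measurableSet_Ioi
        intro τ hτ
        apply Real.exp_le_exp.mpr
        have := part1 τ (le_of_lt hτ)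
        linarith
      have hval : (∫ τ in Set.Ioi τs, Real.exp (-(s * τ)))
          = Real.exp (-(s * τs)) / s := by
        have := MeasureTheory.integral_comp_mul_left_Ioi
          (fun y => Real.exp (-y)) τs hspos
        simp only [smul_eq_mul] at this
        rw [this, integral_exp_neg_Ioi]
        ring
      linarith
    linarith
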